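/- Let s be a string and ℓ ≥ 1 an integer with 2ℓ ≤ |s|, and suppose the prefix s[1..2ℓ] is an order-preserving square, i.e., s[1..ℓ] ≈ s[ℓ+1..2ℓ] and s[1..ℓ] ≠ s[ℓ+1..2ℓ]. Then there exists a position i with ℓ + 1 ≤ i ≤ 2ℓ such that the character s[i] does not occur in s[1..ℓ], and both i and i − ℓ are leftmost occurrences in s. -/

import Mathlib

/-- Strings are modelled as functions `w : ℕ → α` (1-indexed); a string of length `n`
uses positions `1..n`. `OpIso w i j ℓ` says the fragments `w[i..i+ℓ-1]` and
`w[j..j+ℓ-1]` are order-isomorphic. -/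
def OpIso {α : Type*} [LinearOrder α] (w : ℕ → α) (i j ℓ : ℕ) : Prop :=
  ∀ a b : ℕ, a < ℓ → b < ℓ → (w (i + a) ≤ w (i + b) ↔ w (j + a) ≤ w (j + b))

/-- The fragment `w[i..i+2ℓ-1]` is an order-preserving square: its two arms of length `ℓ`
are order-isomorphic but not equal as words. -/
def IsOpSquareAt {α : Type*} [LinearOrder α] (w : ℕ → α) (i ℓ : ℕ) : Prop :=
  OpIso w i (i + ℓ) ℓ ∧ ∃ a : ℕ, a < ℓ ∧ w (i + a) ≠ w (i + ℓ + a)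

/-- Position `i` is a leftmost occurrence in `w`: no earlier position carries the same character. -/
def Leftmost {α : Type*} [LinearOrder α] (w : ℕ → α) (i : ℕ) : Prop :=
  ∀ j : ℕ, 1 ≤ j → j < i → w j ≠ w i

/-- `b` is an op-border of the fragment of length `m` starting at position `i`:
its prefix of length `b` is order-isomorphic to its suffix of length `b`. -/
def OpBorderAt {α : Type*} [LinearOrder α] (w : ℕ → α) (i m b : ℕ) : Prop :=
  b ≤ m ∧ OpIso w i (i + (m - b)) b


lemma key1 {α : Type*} [LinearOrder α] (u v : ℕ → α) (ℓ : ℕ)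
    (hiso : ∀ a b : ℕ, a < ℓ → b < ℓ → (u a ≤ u b ↔ v a ≤ v b))
    (a0 : ℕ) (h0 : a0 < ℓ) (hlt : u a0 < v a0) :
    ∃ k, k < ℓ ∧ (∀ m, m < ℓ → u m ≠ v k) ∧ (∀ b, b < k → v b ≠ v k) ∧
      (∀ b, b < k → u b ≠ u k) := by
  have hlt_iff : ∀ a b : ℕ, a < ℓ → b < ℓ → (u a < u b ↔ v a < v b) := by
    intro a b ha hb
    rw [lt_iff_not_ge, lt_iff_not_ge, hiso b a hb ha]
  have heq_iff : ∀ a b : ℕ, a < ℓ → b < ℓ → (u a = u b ↔ v a = v b) := by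
    intro a b ha hb
    rw [le_antisymm_iff, le_antisymm_iff, hiso a b ha hb, hiso b a hb ha]
  set T := (Finset.range ℓ).filter (fun a => u a < v a) with hT
  have ha0T : a0 ∈ T := by simp [hT, Finset.mem_filter, Finset.mem_range, h0, hlt]
  obtain ⟨ks, hksT, hmax⟩ := T.exists_max_image v ⟨a0, ha0T⟩
  have hksℓ : ks < ℓ := by
    have := (Finset.mem_filter.1 hksT).1; simpa using this
  have hksuv : u ks < v ks := (Finset.mem_filter.1 hksT).2
  set S := (Finset.range ℓ).filter (fun a => v a = v ks) with hS
  have hksS : ks ∈ S := by simp [hS, hksℓ]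
  have hSne : S.Nonempty := ⟨ks, hksS⟩
  set k := S.min' hSne with hk
  have hkS : k ∈ S := S.min'_mem hSne
  have hkℓ : k < ℓ := by
    have := (Finset.mem_filter.1 hkS).1; simpa using this
  have hvk : v k = v ks := (Finset.mem_filter.1 hkS).2
  refine ⟨k, hkℓ, ?_, ?_, ?_⟩
  · intro m hm heq
    rw [hvk] at heq
    have h1 : u ks < u m := heq ▸ hksuv
    have h2 : v ks < v m := (hlt_iff ks m hksℓ hm).1 h1
    have hmT : m ∈ T := by
      simp only [hT, Finset.mem_filter, Finset.mem_range]
      exact ⟨hm, heq ▸ h2⟩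
    exact absurd (hmax m hmT) (not_le.2 h2)
  · intro b hb heq
    have hbℓ : b < ℓ := lt_trans hb hkℓ
    have hbS : b ∈ S := by
      simp only [hS, Finset.mem_filter, Finset.mem_range]
      exact ⟨hbℓ, heq.trans hvk⟩
    exact absurd (S.min'_le b hbS) (not_le.2 hb)
  · intro b hb heq
    have hbℓ : b < ℓ := lt_trans hb hkℓ
    have : v b = v k := (heq_iff b k hbℓ hkℓ).1 heq
    have hbS : b ∈ S := by
      simp only [hS, Finset.mem_filter, Finset.mem_range]
      exact ⟨hbℓ, this.trans hvk⟩
    exact absurd (S.min'_le b hbS) (not_le.2 hb)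

lemma key {α : Type*} [LinearOrder α] (u v : ℕ → α) (ℓ : ℕ)
    (hiso : ∀ a b : ℕ, a < ℓ → b < ℓ → (u a ≤ u b ↔ v a ≤ v b))
    (a0 : ℕ) (h0 : a0 < ℓ) (hne : u a0 ≠ v a0) :
    ∃ k, k < ℓ ∧ (∀ m, m < ℓ → u m ≠ v k) ∧ (∀ b, b < k → v b ≠ v k) ∧
      (∀ b, b < k → u b ≠ u k) := by
  rcases hne.lt_or_gt with h | h
  · exact key1 u v ℓ hiso a0 h0 h
  · obtain ⟨k, hk, h1, h2, h3⟩ :=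
      key1 (α := αᵒᵈ) (fun a => OrderDual.toDual (u a)) (fun a => OrderDual.toDual (v a)) ℓ
        (fun a b ha hb => hiso b a hb ha) a0 h0 h
    exact ⟨k, hk, fun m hm => fun he => h1 m hm (congrArg _ he),
      fun b hb he => h2 b hb (congrArg _ he), fun b hb he => h3 b hb (congrArg _ he)⟩

/-- If the prefix s[1..2ℓ] is an op-square then there is a position i,
ℓ+1 ≤ i ≤ 2ℓ, whose character does not occur in s[1..ℓ], and both i and i − ℓ are
leftmost occurrences in s. -/
theorem op_square_gives_leftmost_pair {α : Type*} [LinearOrder α]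
    (w : ℕ → α) (n ℓ : ℕ) (hℓ : 1 ≤ ℓ) (h2ℓ : 2 * ℓ ≤ n)
    (hsq : IsOpSquareAt w 1 ℓ) :
    ∃ i : ℕ, ℓ + 1 ≤ i ∧ i ≤ 2 * ℓ ∧ (∀ j : ℕ, 1 ≤ j → j ≤ ℓ → w j ≠ w i) ∧
      Leftmost w i ∧ Leftmost w (i - ℓ) := by
  obtain ⟨hiso0, a0, ha0, hne0⟩ := hsq
  obtain ⟨k, hkℓ, h1, h2, h3⟩ :=
    key (fun a => w (1 + a)) (fun a => w (1 + ℓ + a)) ℓ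
      (fun a b ha hb => hiso0 a b ha hb) a0 ha0 hne0
  refine ⟨1 + ℓ + k, by omega, by omega, ?_, ?_, ?_⟩
  · intro j hj1 hjℓ he
    have hj : j = 1 + (j - 1) := by omega
    exact h1 (j - 1) (by omega) (by rw [← hj]; exact he)
  · intro j hj1 hji he
    by_cases hc : j ≤ ℓ
    · have hj : j = 1 + (j - 1) := by omega
      exact h1 (j - 1) (by omega) (by rw [← hj]; exact he)
    · have hj : j = 1 + ℓ + (j - (1 + ℓ)) := by omega
      exact h2 (j - (1 + ℓ)) (by omega) (by rw [← hj]; exact he)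
  · have hi : 1 + ℓ + k - ℓ = 1 + k := by omega
    rw [hi]
    intro j hj1 hjk he
    have hj : j = 1 + (j - 1) := by omega
    exact h3 (j - 1) (by omega) (by rw [← hj]; exact he)
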